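/- The path P_2 on two vertices is the only tree with no adjacency eigenvalue in the open interval (-1, 1). -/

import Mathlib

open scoped Classical

/-- Characteristic polynomial of the adjacency matrix of a graph. -/
noncomputable def gCharpoly {V : Type*} [Fintype V] (G : SimpleGraph V) : Polynomial ℝ :=
  letI := Classical.decEq V
  letI := Classical.decRel G.Adj
  (G.adjMatrix ℝ).charpoly

/-- Adjacency eigenvalues listed in non-increasing order (with multiplicity). -/
noncomputable def eigsDesc {V : Type*} [Fintype V] (G : SimpleGraph V) : List ℝ :=
  ((gCharpoly G).roots.sort (· ≤ ·)).reverse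

/-- Number of adjacency eigenvalues in the open interval (-1, 1), with multiplicity. -/
noncomputable def numIn {V : Type*} [Fintype V] (G : SimpleGraph V) : ℕ :=
  ((gCharpoly G).roots.filter (fun x => -1 < x ∧ x < 1)).card

/-- Multiplicity of `lam` as an adjacency eigenvalue. -/
noncomputable def multOf {V : Type*} [Fintype V] (G : SimpleGraph V) (lam : ℝ) : ℕ :=
  (gCharpoly G).roots.count lam

/-- Nullity: dimension of the kernel of the adjacency matrix. -/
noncomputable def gNullity {V : Type*} [Fintype V] (G : SimpleGraph V) : ℕ :=
  letI := Classical.decRel G.Adj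
  Module.finrank ℝ (LinearMap.ker (G.adjMatrix ℝ).mulVecLin)

open Polynomial Matrix Finset

section Aux

variable {n : Type*} [Fintype n] [DecidableEq n]

lemma myCharpolyConj (M U : Matrix n n ℝ) (hU : U ∈ Matrix.unitaryGroup n ℝ) :
    (U * M * star U).charpoly = M.charpoly := by
  have h1 : U * star U = 1 := (Matrix.mem_unitaryGroup_iff (A := U)).mp hU
  set φ : Matrix n n ℝ →+* Matrix n n ℝ[X] := (Polynomial.C : ℝ →+* ℝ[X]).mapMatrix with hφ
  have e1 : φ U * Matrix.scalar n (X : ℝ[X]) * φ (star U) = Matrix.scalar n X := by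
    calc φ U * Matrix.scalar n (X : ℝ[X]) * φ (star U)
        = Matrix.scalar n (X : ℝ[X]) * (φ U * φ (star U)) := by
          rw [(Matrix.scalar_commute (X : ℝ[X]) (fun r' => Commute.all _ _) (φ U)).symm.eq,
            mul_assoc]
      _ = Matrix.scalar n X := by rw [← _root_.map_mul, h1, _root_.map_one φ, mul_one]
  have key : charmatrix (U * M * star U) = φ U * charmatrix M * φ (star U) := by
    calc charmatrix (U * M * star U)
        = Matrix.scalar n X - φ (U * M * star U) := rfl
      _ = φ U * Matrix.scalar n X * φ (star U) - φ U * φ M * φ (star U) := by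
          rw [e1, _root_.map_mul, _root_.map_mul]
      _ = φ U * (Matrix.scalar n X - φ M) * φ (star U) := by
          rw [mul_sub, sub_mul]
      _ = φ U * charmatrix M * φ (star U) := rfl
  have hdet1 : (φ U).det * (φ (star U)).det = 1 := by
    rw [← Matrix.det_mul, ← _root_.map_mul, h1, _root_.map_one φ, Matrix.det_one]
  rw [Matrix.charpoly, Matrix.charpoly, key, Matrix.det_mul, Matrix.det_mul,
    mul_right_comm, hdet1, one_mul]

lemma myCharpolyDiagonal (d : n → ℝ) :
    (Matrix.diagonal d).charpoly
      = ((Finset.univ.val.map d).map (fun a => X - Polynomial.C a)).prod := by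
  have hcm : charmatrix (Matrix.diagonal d)
      = Matrix.diagonal (fun i => (X : ℝ[X]) - Polynomial.C (d i)) := by
    ext i j
    by_cases h : i = j
    · subst h; simp
    · rw [charmatrix_apply_ne _ _ _ h, Matrix.diagonal_apply_ne _ h,
        Matrix.diagonal_apply_ne _ h, map_zero, neg_zero]
  rw [Matrix.charpoly, hcm, Matrix.det_diagonal, Finset.prod_eq_multiset_prod,
    Multiset.map_map]
  rfl

lemma mySpectralReal {A : Matrix n n ℝ} (hA : A.IsHermitian) :
    A = (hA.eigenvectorUnitary : Matrix n n ℝ) * Matrix.diagonal hA.eigenvalues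
        * star (hA.eigenvectorUnitary : Matrix n n ℝ) := by
  conv_lhs => rw [hA.spectral_theorem]
  congr 2

lemma myRootsEig {A : Matrix n n ℝ} (hA : A.IsHermitian) :
    A.charpoly.roots = Finset.univ.val.map hA.eigenvalues := by
  have h : A.charpoly = (Matrix.diagonal hA.eigenvalues).charpoly := by
    conv_lhs => rw [mySpectralReal hA]
    exact myCharpolyConj _ _ hA.eigenvectorUnitary.2
  rw [h, myCharpolyDiagonal, Polynomial.roots_multiset_prod_X_sub_C]

end Aux

lemma myGCharpolyEq {V : Type*} [Fintype V] [DecidableEq V] (G : SimpleGraph V)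
    [DecidableRel G.Adj] : gCharpoly G = (G.adjMatrix ℝ).charpoly := by
  unfold gCharpoly
  congr!

lemma myAdjHermitian {V : Type*} [Fintype V] [DecidableEq V] (G : SimpleGraph V)
    [DecidableRel G.Adj] : (G.adjMatrix ℝ).IsHermitian := by
  rw [Matrix.IsHermitian]
  ext i j
  simp [Matrix.conjTranspose_apply, SimpleGraph.adjMatrix_apply, SimpleGraph.adj_comm]


lemma myLeaf {V : Type*} [Fintype V] [DecidableEq V] (T : SimpleGraph V) [DecidableRel T.Adj]
    (hT : T.IsTree) (h2 : 2 ≤ Fintype.card V) : ∃ v, T.degree v = 1 := by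
  by_contra h
  push_neg at h
  have hpos : ∀ v : V, 0 < T.degree v := by
    intro v
    rw [SimpleGraph.degree_pos_iff_exists_adj]
    obtain ⟨u, hu⟩ := Fintype.exists_ne_of_one_lt_card (by omega) v
    obtain ⟨w⟩ := hT.isConnected.preconnected v u
    cases w with
    | nil => exact absurd rfl hu
    | cons h' p => exact ⟨_, h'⟩
  have h2d : ∀ v : V, 2 ≤ T.degree v := fun v => by
    have h1 := hpos v; have h2' := h v; omega
  have hcount : T.edgeFinset.card + 1 = Fintype.card V := hT.card_edgeFinset
  have hsum : ∑ v : V, T.degree v = 2 * T.edgeFinset.card :=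
    T.sum_degrees_eq_twice_card_edges
  have hge : 2 * Fintype.card V ≤ ∑ v : V, T.degree v := by
    calc 2 * Fintype.card V = ∑ _v : V, 2 := by
          rw [Finset.sum_const, Finset.card_univ, smul_eq_mul, mul_comm]
      _ ≤ ∑ v : V, T.degree v := Finset.sum_le_sum fun v _ => h2d v
  omega

lemma myUniqNbr {V : Type*} [Fintype V] [DecidableEq V] (T : SimpleGraph V) [DecidableRel T.Adj]
    {v u : V} (hd : T.degree v = 1) (hu : T.Adj v u) : ∀ k, T.Adj v k → k = u := by
  intro k hk
  have hcard : (T.neighborFinset v).card ≤ 1 := le_of_eq hd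
  exact Finset.card_le_one.mp hcard k ((SimpleGraph.mem_neighborFinset T v k).mpr hk)
    u ((SimpleGraph.mem_neighborFinset T v u).mpr hu)

lemma mySecondNbr {V : Type*} [Fintype V] [DecidableEq V] (T : SimpleGraph V) [DecidableRel T.Adj]
    (hT : T.IsTree) (h3 : 3 ≤ Fintype.card V) {v u : V} (hdv : T.degree v = 1)
    (hvu : T.Adj v u) : ∃ w, T.Adj u w ∧ w ≠ v := by
  by_contra h
  push_neg at h
  have key : ∀ (a z : V) (p : T.Walk a z), (a = v ∨ a = u) → (z = v ∨ z = u) := by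
    intro a z p
    induction p with
    | nil => exact id
    | cons hab p ih =>
      intro ha
      apply ih
      rcases ha with ha | ha
      · subst ha; right; exact myUniqNbr T hdv hvu _ hab
      · subst ha; left; exact h _ hab
  have hallz : ∀ z : V, z = v ∨ z = u := fun z =>
    key v z (hT.isConnected.preconnected v z).some (Or.inl rfl)
  have hsub : (Finset.univ : Finset V) ⊆ {v, u} := by
    intro z _
    rcases hallz z with h' | h' <;> simp [h']
  have : Fintype.card V ≤ 2 := by
    calc Fintype.card V = (Finset.univ : Finset V).card := rfl
      _ ≤ ({v, u} : Finset V).card := Finset.card_le_card hsub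
      _ ≤ ({u} : Finset V).card + 1 := Finset.card_insert_le v {u}
      _ ≤ 2 := by simp
  omega

theorem stmt7 {V : Type*} [Fintype V] (T : SimpleGraph V) (hT : T.IsTree) :
    numIn T = 0 ↔ Fintype.card V = 2 := by
  classical
  have hcard1 : 1 ≤ Fintype.card V := @Fintype.card_pos V _ hT.isConnected.nonempty
  constructor
  · intro hnum
    unfold numIn at hnum
    by_contra hne
    rcases lt_or_gt_of_ne hne with hlt | hgt
    · -- card V = 1 : eigenvalue 0
      have h1 : Fintype.card V = 1 := by omega
      have hsub : Subsingleton V := Fintype.card_le_one_iff_subsingleton.mp (le_of_eq h1)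
      have hAeq : T.adjMatrix ℝ = Matrix.diagonal (fun _ : V => (0:ℝ)) := by
        ext i j
        have hij : i = j := Subsingleton.elim i j
        subst hij
        simp
      have hroots : (gCharpoly T).roots = Finset.univ.val.map (fun _ : V => (0:ℝ)) := by
        rw [myGCharpolyEq T, hAeq, myCharpolyDiagonal, Polynomial.roots_multiset_prod_X_sub_C]
      obtain ⟨v⟩ : Nonempty V := hT.isConnected.nonempty
      have h0mem : (0:ℝ) ∈ (gCharpoly T).roots := by
        rw [hroots]
        exact Multiset.mem_map.mpr ⟨v, Finset.mem_val.mpr (Finset.mem_univ v), rfl⟩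
      have : (0:ℝ) ∈ (gCharpoly T).roots.filter (fun x => -1 < x ∧ x < 1) :=
        Multiset.mem_filter.mpr ⟨h0mem, by norm_num⟩
      rw [Multiset.card_eq_zero.mp hnum] at this
      exact absurd this (Multiset.notMem_zero _)
    · -- card V ≥ 3
      set A := T.adjMatrix ℝ with hAdef
      have hA : A.IsHermitian := myAdjHermitian T
      set μ := hA.eigenvalues with hμdef
      have hroots : (gCharpoly T).roots = Finset.univ.val.map μ := by
        rw [myGCharpolyEq T]; exact myRootsEig hA
      have hall : ∀ x ∈ (gCharpoly T).roots, ¬(-1 < x ∧ x < 1) := by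
        intro x hx hcond
        have hmem : x ∈ (gCharpoly T).roots.filter (fun x => -1 < x ∧ x < 1) :=
          Multiset.mem_filter.mpr ⟨hx, hcond⟩
        rw [Multiset.card_eq_zero.mp hnum] at hmem
        exact absurd hmem (Multiset.notMem_zero _)
      have hsq : ∀ i : V, 1 ≤ μ i * μ i := by
        intro i
        have hmem : μ i ∈ (gCharpoly T).roots := by
          rw [hroots]
          exact Multiset.mem_map.mpr ⟨i, Finset.mem_val.mpr (Finset.mem_univ i), rfl⟩
        have h := hall _ hmem
        rcases le_or_gt (μ i) (-1) with h' | h'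
        · nlinarith
        · have h1' : 1 ≤ μ i := by
            by_contra hc; push_neg at hc; exact h ⟨h', hc⟩
          nlinarith
      set U : Matrix V V ℝ := (hA.eigenvectorUnitary : Matrix V V ℝ) with hUdef
      have hU1 : U * star U = 1 :=
        (Matrix.mem_unitaryGroup_iff (A := U)).mp hA.eigenvectorUnitary.2
      have hU2 : star U * U = 1 :=
        (Matrix.mem_unitaryGroup_iff' (A := U)).mp hA.eigenvectorUnitary.2
      have hAspec : A = U * Matrix.diagonal μ * star U := mySpectralReal hA
      have hMeq : A * A - 1 = U * Matrix.diagonal (fun i => μ i * μ i - 1) * star U := by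
        have hdd : Matrix.diagonal (fun i : V => μ i * μ i - 1)
            = Matrix.diagonal μ * Matrix.diagonal μ - 1 := by
          rw [Matrix.diagonal_mul_diagonal, ← Matrix.diagonal_one, Matrix.diagonal_sub]
        rw [hdd, Matrix.mul_sub, Matrix.sub_mul, Matrix.mul_one, hU1]
        congr 1
        conv_lhs => rw [hAspec]
        simp only [← mul_assoc]
        rw [mul_assoc (U * Matrix.diagonal μ) (star U) U, hU2, mul_one]
      have hd0 : (0 : V → ℝ) ≤ fun i => μ i * μ i - 1 := fun i => sub_nonneg.mpr (hsq i)
      have hPSD : (A * A - 1).PosSemidef := by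
        rw [hMeq, Matrix.star_eq_conjTranspose]
        exact (Matrix.PosSemidef.diagonal hd0).mul_mul_conjTranspose_same U
      obtain ⟨v, hdegv⟩ := myLeaf T hT (by omega)
      obtain ⟨u, hvu⟩ : ∃ u, T.Adj v u := by
        rw [← SimpleGraph.degree_pos_iff_exists_adj]; omega
      obtain ⟨w, huw, hwv⟩ := mySecondNbr T hT (by omega) hdegv hvu
      have hvw : v ≠ w := by
        intro hcon
        exact hwv hcon.symm
      have hnbrv : T.neighborFinset v = {u} := by
        apply Finset.eq_singleton_iff_unique_mem.mpr
        exact ⟨(SimpleGraph.mem_neighborFinset T v u).mpr hvu,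
          fun k hk => myUniqNbr T hdegv hvu k ((SimpleGraph.mem_neighborFinset T v k).mp hk)⟩
      set Mm := A * A - 1 with hMm
      have hMvv : Mm v v = 0 := by
        rw [hMm, hAdef, Matrix.sub_apply, Matrix.one_apply_eq,
          SimpleGraph.adjMatrix_mul_self_apply_self, hdegv]
        norm_num
      have hMvw : Mm v w = 1 := by
        rw [hMm, hAdef, Matrix.sub_apply, Matrix.one_apply_ne hvw,
          SimpleGraph.adjMatrix_mul_apply, hnbrv, Finset.sum_singleton,
          SimpleGraph.adjMatrix_apply, if_pos huw]
        norm_num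
      have hMwv : Mm w v = 1 := by
        have hH := hPSD.1
        have hflip : Mm w v = Mm v w := by
          conv_lhs => rw [← hH]
          simp [Matrix.conjTranspose_apply]
        rw [hflip, hMvw]
      have hMww : Mm w w = (T.degree w : ℝ) - 1 := by
        rw [hMm, hAdef, Matrix.sub_apply, Matrix.one_apply_eq,
          SimpleGraph.adjMatrix_mul_self_apply_self]
      set c : ℝ := -(T.degree w : ℝ) with hc
      set x : V → ℝ := c • (Pi.single v (1:ℝ) : V → ℝ) + (Pi.single w (1:ℝ) : V → ℝ) with hx
      have hq := hPSD.dotProduct_mulVec_nonneg x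
      have hqval : dotProduct (star x) (Mm *ᵥ x)
          = c * c * Mm v v + c * Mm v w + c * Mm w v + Mm w w := by
        have hxs : star x = x := star_trivial x
        rw [hxs, hx]
        simp only [Matrix.mulVec_add, Matrix.mulVec_smul, Matrix.mulVec_single, mul_one,
          add_dotProduct, smul_dotProduct, single_dotProduct,
          Pi.add_apply, Pi.smul_apply, smul_eq_mul, one_mul,
          MulOpposite.op_one, one_smul, Matrix.col_apply]
        ring
      rw [hqval, hMvv, hMvw, hMwv, hMww, hc] at hq
      have hdw : (0:ℝ) ≤ (T.degree w : ℝ) := Nat.cast_nonneg _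
      nlinarith [hq, hdw]
  · intro h2
    have e : V ≃ Fin 2 := Fintype.equivFinOfCardEq h2
    obtain ⟨a, ha⟩ : ∃ a, a = e.symm 0 := ⟨_, rfl⟩
    obtain ⟨b, hb⟩ : ∃ b, b = e.symm 1 := ⟨_, rfl⟩
    have hab : a ≠ b := by
      intro hcon
      rw [ha, hb] at hcon
      have := e.symm.injective hcon
      simp at this
    have hfin2 : ∀ z : Fin 2, z = 0 ∨ z = 1 := by decide
    have hallz : ∀ z : V, z = a ∨ z = b := by
      intro z
      rcases hfin2 (e z) with h' | h'
      · left; rw [ha, ← h', Equiv.symm_apply_apply]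
      · right; rw [hb, ← h', Equiv.symm_apply_apply]
    have hAdj : T.Adj a b := by
      obtain ⟨wk⟩ := hT.isConnected.preconnected a b
      cases wk with
      | nil => exact absurd rfl hab
      | @cons _ c _ h' p =>
        rcases hallz c with rfl | rfl
        · exact absurd h' (T.irrefl)
        · exact h'
    have hB : (Matrix.reindex e e (T.adjMatrix ℝ)).charpoly
        = (X - C 1) * (X - C (-1)) := by
      set B := Matrix.reindex e e (T.adjMatrix ℝ) with hBdef
      have h00 : B 0 0 = 0 := by simp [hBdef, ← ha]
      have h11 : B 1 1 = 0 := by simp [hBdef, ← hb]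
      have h01 : B 0 1 = 1 := by simp [hBdef, ← ha, ← hb, hAdj]
      have h10 : B 1 0 = 1 := by simp [hBdef, ← ha, ← hb, hAdj.symm]
      have hdet : B.charpoly
          = charmatrix B 0 0 * charmatrix B 1 1 - charmatrix B 0 1 * charmatrix B 1 0 :=
        Matrix.det_fin_two _
      rw [hdet, charmatrix_apply_eq, charmatrix_apply_eq,
        charmatrix_apply_ne _ _ _ (by decide : (0 : Fin 2) ≠ 1),
        charmatrix_apply_ne _ _ _ (by decide : (1 : Fin 2) ≠ 0),
        h00, h11, h01, h10]
      simp only [_root_.map_zero, _root_.map_one, sub_zero, _root_.map_neg]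
      ring
    have hroots : (gCharpoly T).roots = {1, -1} := by
      rw [myGCharpolyEq T, ← Matrix.charpoly_reindex e (T.adjMatrix ℝ), hB,
        Polynomial.roots_mul (mul_ne_zero (Polynomial.X_sub_C_ne_zero 1)
          (Polynomial.X_sub_C_ne_zero (-1))),
        Polynomial.roots_X_sub_C, Polynomial.roots_X_sub_C]
      rfl
    unfold numIn
    rw [hroots]
    rw [show ({1, -1} : Multiset ℝ) = 1 ::ₘ {-1} from rfl]
    rw [Multiset.filter_cons, Multiset.filter_singleton,
      if_neg (by norm_num), if_neg (by norm_num)]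
    simp
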